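/- Let A, B be invertible elements of an associative unital ring R satisfying the fundamental relation, and suppose q := (1-A)A⁻¹B⁻¹AB is a central element (an element of the ground ring). With C = A⁻¹B⁻¹A(1-A) and D = 1 - A⁻¹B⁻¹AB, the matrix S = [[A,B],[C,D]] satisfies S² = (1-q)S + q·I. -/
import Mathlib


/-- For units `A, B` of a ring `R` satisfying the fundamental relation, if
`q = (1-A)A⁻¹B⁻¹AB` is central, then with `C = A⁻¹B⁻¹A(1-A)`, `D = 1 - A⁻¹B⁻¹AB`,
the matrix `S = [[A,B],[C,D]]` satisfies `S² = (1-q)S + qI`. -/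
theorem S_quadratic (R : Type) [Ring R] (A B : Rˣ)
    (hfund : ((A⁻¹ : Rˣ) : R) * ((B⁻¹ : Rˣ) : R) * (A : R) * (B : R) -
        ((B⁻¹ : Rˣ) : R) * (A : R) * (B : R) =
      (B : R) * ((A⁻¹ : Rˣ) : R) * ((B⁻¹ : Rˣ) : R) * (A : R) - (A : R))
    (q : R)
    (hq : q = (1 - (A : R)) * ((A⁻¹ : Rˣ) : R) * ((B⁻¹ : Rˣ) : R) * (A : R) * (B : R))
    (hqc : ∀ r : R, Commute q r) :
    (!![(A : R), (B : R);
        ((A⁻¹ : Rˣ) : R) * ((B⁻¹ : Rˣ) : R) * (A : R) * (1 - (A : R)),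
        1 - ((A⁻¹ : Rˣ) : R) * ((B⁻¹ : Rˣ) : R) * (A : R) * (B : R)]) ^ 2 =
      (1 - q) • !![(A : R), (B : R);
        ((A⁻¹ : Rˣ) : R) * ((B⁻¹ : Rˣ) : R) * (A : R) * (1 - (A : R)),
        1 - ((A⁻¹ : Rˣ) : R) * ((B⁻¹ : Rˣ) : R) * (A : R) * (B : R)] +
      q • (1 : Matrix (Fin 2) (Fin 2) R) := by
  set a : R := (A : R) with ha'
  set b : R := (B : R) with hb'
  set ai : R := ((A⁻¹ : Rˣ) : R) with hai'
  set bi : R := ((B⁻¹ : Rˣ) : R) with hbi'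
  have haai : a * ai = 1 := A.mul_inv
  have haia : ai * a = 1 := A.inv_mul
  have hbbi : b * bi = 1 := B.mul_inv
  have hbib : bi * b = 1 := B.inv_mul
  -- key : b * ai * bi * a = q + a
  have key : b * ai * bi * a = q + a := by
    have h1 : q = ai * bi * a * b - bi * a * b := by
      rw [hq]
      have : (1 - a) * ai = ai - 1 := by rw [sub_mul, one_mul, haai]
      rw [this]; noncomm_ring
    rw [h1, hfund]; noncomm_ring
  -- commutation helper
  have hc : ∀ x y : R, x * (q * y) = q * (x * y) := by
    intro x y
    rw [← mul_assoc, ← (hqc x).eq, mul_assoc]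
  -- the four scalar identities
  have h00 : a * a + b * (ai * bi * a * (1 - a)) = (1 - q) * a + q := by
    have e : b * (ai * bi * a * (1 - a)) = (b * ai * bi * a) * (1 - a) := by
      noncomm_ring
    rw [e, key]; noncomm_ring
  have h01 : a * b + b * (1 - ai * bi * a * b) = (1 - q) * b := by
    have e : b * (ai * bi * a * b) = (b * ai * bi * a) * b := by noncomm_ring
    have : a * b + b * (1 - ai * bi * a * b) = a * b + b - (b * ai * bi * a) * b := by
      rw [← e]; noncomm_ring
    rw [this, key]; noncomm_ring
  have h10 : (ai * bi * a * (1 - a)) * a + (1 - ai * bi * a * b) * (ai * bi * a * (1 - a)) =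
      (1 - q) * (ai * bi * a * (1 - a)) := by
    have e2' : (ai * bi * a * (1 - a)) * a + (1 - ai * bi * a * b) * (ai * bi * a * (1 - a)) =
        (ai * bi * a * (1 - a)) * a + ai * bi * a * (1 - a) -
          ai * (bi * (a * ((b * ai * bi * a) * (1 - a)))) := by noncomm_ring
    rw [e2', key]
    have e2 : a * ((q + a) * (1 - a)) = q * (a * (1 - a)) + a * (a * (1 - a)) := by
      rw [add_mul, mul_add, ← mul_assoc a q, ← (hqc a).eq, mul_assoc]
    rw [e2, mul_add, mul_add, hc, hc]
    noncomm_ring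
  have h11 : (ai * bi * a * (1 - a)) * b + (1 - ai * bi * a * b) * (1 - ai * bi * a * b) =
      (1 - q) * (1 - ai * bi * a * b) + q := by
    have e2 : (ai * bi * a * (1 - a)) * b + (1 - ai * bi * a * b) * (1 - ai * bi * a * b) =
        (ai * bi * a * (1 - a)) * b + 1 - 2 * (ai * bi * a * b) +
          ai * (bi * (a * ((b * ai * bi * a) * b))) := by noncomm_ring
    rw [e2, key]
    have e3 : a * ((q + a) * b) = q * (a * b) + a * (a * b) := by
      rw [add_mul, mul_add, ← mul_assoc a q, ← (hqc a).eq, mul_assoc]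
    rw [e3, mul_add, mul_add, hc, hc]
    noncomm_ring
  ext i j
  fin_cases i <;> fin_cases j <;>
    simp [pow_two, Matrix.mul_apply, Fin.sum_univ_two, Matrix.one_apply] <;>
    [exact h00; exact h01; exact h10; exact h11]
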